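/- For every positive integer n, ζ(2n+1) = lim_{q→∞} (π/(2q))^{2n+1} · Σ_{p=1}^{q} cot^{2n+1}(pπ/(2q+1)). -/

import Mathlib

open Real Filter Finset Topology

lemma cot_le_one_div {x : ℝ} (h1 : 0 < x) (h2 : x < π / 2) : Real.cot x ≤ 1 / x := by
  have htan : x < Real.tan x := Real.lt_tan h1 h2
  have hcot : Real.cot x = (Real.tan x)⁻¹ := by
    rw [Real.cot_eq_cos_div_sin, Real.tan_eq_sin_div_cos, inv_div]
  rw [hcot, one_div]
  exact inv_anti₀ h1 htan.le

lemma cot_nonneg_of {x : ℝ} (h1 : 0 < x) (h2 : x < π / 2) : 0 ≤ Real.cot x := by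
  rw [Real.cot_eq_cos_div_sin]
  have hs : 0 < Real.sin x := Real.sin_pos_of_pos_of_lt_pi h1 (h2.trans (by linarith [Real.pi_pos]))
  have hc : 0 < Real.cos x := Real.cos_pos_of_mem_Ioo ⟨by linarith [Real.pi_pos], h2⟩
  positivity

lemma tendsto_mul_cot : Tendsto (fun t : ℝ => t * Real.cot t) (𝓝[≠] (0:ℝ)) (𝓝 1) := by
  have hs : Tendsto (fun t : ℝ => Real.sin t / t) (𝓝[≠] (0:ℝ)) (𝓝 1) := by
    have h := Real.hasDerivAt_sin 0
    rw [Real.cos_zero, hasDerivAt_iff_tendsto_slope] at h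
    refine h.congr fun t => ?_
    simp [slope_def_field]
  have hts : Tendsto (fun t : ℝ => t / Real.sin t) (𝓝[≠] (0:ℝ)) (𝓝 1) := by
    have h := hs.inv₀ one_ne_zero
    rw [inv_one] at h
    refine h.congr fun t => ?_
    rw [inv_div]
  have hc : Tendsto (fun t : ℝ => Real.cos t) (𝓝[≠] (0:ℝ)) (𝓝 1) := by
    have h := (Real.continuous_cos.tendsto 0).mono_left (nhdsWithin_le_nhds (s := {(0:ℝ)}ᶜ))
    simpa using h
  have h := hc.mul hts
  rw [one_mul] at h
  refine h.congr fun t => ?_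
  rw [Real.cot_eq_cos_div_sin]
  ring

theorem zeta_odd_cot_limit (n : ℕ) (hn : 0 < n) :
    Tendsto (fun q : ℕ =>
        (π / (2 * q)) ^ (2 * n + 1) *
          ∑ p ∈ Finset.Icc 1 q, (Real.cot (p * π / (2 * q + 1))) ^ (2 * n + 1))
      atTop (nhds (∑' k : ℕ, 1 / ((k : ℝ) + 1) ^ (2 * n + 1))) := by
  set m := 2 * n + 1 with hm
  have hpi := Real.pi_pos
  set F : ℕ → ℕ → ℝ := fun q k =>
    if k + 1 ≤ q then (π / (2 * q)) ^ m *
      (Real.cot ((((k : ℝ) + 1)) * π / (2 * q + 1))) ^ m else 0 with hF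
  -- summable bound
  have hsum : Summable (fun k : ℕ => (3 / 2 / ((k : ℝ) + 1)) ^ m) := by
    have h1 : Summable (fun k : ℕ => 1 / ((k : ℝ)) ^ m) := by
      rw [summable_one_div_nat_pow]
      omega
    have h2 : Summable (fun k : ℕ => 1 / (((k : ℕ) + 1 : ℕ) : ℝ) ^ m) :=
      (summable_nat_add_iff (f := fun k : ℕ => 1 / ((k:ℝ)) ^ m) 1).mpr h1
    have h3 : Summable (fun k : ℕ => (3/2 : ℝ) ^ m * (1 / ((k : ℝ) + 1) ^ m)) := by
      refine Summable.mul_left _ ?_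
      refine h2.congr fun k => ?_
      push_cast
      ring
    refine h3.congr fun k => ?_
    rw [mul_one_div, ← div_pow]
  -- pointwise limits
  have hab : ∀ k : ℕ, Tendsto (F · k) atTop (𝓝 (1 / ((k : ℝ) + 1) ^ m)) := by
    intro k
    have hq2 : Tendsto (fun q : ℕ => 2 * (q : ℝ) + 1) atTop atTop := by
      apply Filter.tendsto_atTop_add_const_right
      exact (tendsto_natCast_atTop_atTop).const_mul_atTop two_pos
    have hq2' : Tendsto (fun q : ℕ => 2 * (q : ℝ)) atTop atTop :=
      (tendsto_natCast_atTop_atTop).const_mul_atTop two_pos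
    have hA : Tendsto (fun q : ℕ => ((k : ℝ) + 1) * π / (2 * q + 1)) atTop (𝓝[>] 0) := by
      refine tendsto_nhdsWithin_of_tendsto_nhds_of_eventually_within _ ?_ ?_
      · exact Filter.Tendsto.div_atTop tendsto_const_nhds hq2
      · filter_upwards with q
        have hk1 : (0:ℝ) < (k : ℝ) + 1 := by positivity
        have : (0:ℝ) < 2 * (q:ℝ) + 1 := by positivity
        exact Set.mem_Ioi.mpr (by positivity)
    have hB : Tendsto (fun q : ℕ =>
        (((k : ℝ) + 1) * π / (2 * q + 1)) * Real.cot (((k : ℝ) + 1) * π / (2 * q + 1)))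
        atTop (𝓝 1) := by
      have := tendsto_mul_cot.comp (hA.mono_right (nhdsWithin_mono _ (by
        intro x hx; exact ne_of_gt hx)))
      exact this
    have hC : Tendsto (fun q : ℕ => (2 * (q : ℝ) + 1) / (2 * q)) atTop (𝓝 1) := by
      have h0 : Tendsto (fun q : ℕ => 1 + 1 / (2 * (q : ℝ))) atTop (𝓝 1) := by
        have := Filter.Tendsto.div_atTop (tendsto_const_nhds (x := (1:ℝ))) hq2'
        simpa using (tendsto_const_nhds (x := (1:ℝ))).add this
      refine h0.congr' ?_
      filter_upwards [eventually_ge_atTop 1] with q hq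
      have hq0 : (0:ℝ) < 2 * (q : ℝ) := by
        have : (1:ℝ) ≤ q := by exact_mod_cast hq
        linarith
      field_simp
    have hD : Tendsto (fun q : ℕ => π / (2 * q) *
        Real.cot (((k : ℝ) + 1) * π / (2 * q + 1))) atTop (𝓝 (1 / ((k : ℝ) + 1))) := by
      have h := (hB.mul hC).mul (tendsto_const_nhds (x := 1 / ((k:ℝ) + 1)))
      rw [one_mul, one_mul] at h
      refine h.congr' ?_
      filter_upwards [eventually_ge_atTop 1] with q hq
      have hq0 : (0:ℝ) < 2 * (q : ℝ) := by
        have : (1:ℝ) ≤ q := by exact_mod_cast hq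
        linarith
      have hq1 : (0:ℝ) < 2 * (q : ℝ) + 1 := by linarith
      have hk1 : (0:ℝ) < (k : ℝ) + 1 := by positivity
      field_simp
    have hE := hD.pow m
    rw [div_pow, one_pow] at hE
    refine hE.congr' ?_
    filter_upwards [eventually_ge_atTop (k + 1)] with q hq
    rw [hF]
    simp only [if_pos hq]
    rw [mul_pow]
  -- bound
  have hbound : ∀ᶠ q in atTop, ∀ k : ℕ, ‖F q k‖ ≤ (3 / 2 / ((k : ℝ) + 1)) ^ m := by
    filter_upwards [eventually_ge_atTop 1] with q hq k
    have hk1 : (0:ℝ) < (k : ℝ) + 1 := by positivity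
    by_cases h : k + 1 ≤ q
    · have hq0 : (0:ℝ) < 2 * (q : ℝ) := by
        have : (1:ℝ) ≤ q := by exact_mod_cast hq
        linarith
      have hq1 : (0:ℝ) < 2 * (q : ℝ) + 1 := by linarith
      set x := ((k : ℝ) + 1) * π / (2 * q + 1) with hx
      have hx0 : 0 < x := by positivity
      have hx2 : x < π / 2 := by
        rw [hx, div_lt_div_iff₀ hq1 two_pos]
        have hkq : ((k:ℝ) + 1) ≤ q := by exact_mod_cast h
        nlinarith
      have hc0 : 0 ≤ Real.cot x := cot_nonneg_of hx0 hx2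
      have hc1 : Real.cot x ≤ 1 / x := cot_le_one_div hx0 hx2
      rw [hF]
      simp only [if_pos h]
      rw [← mul_pow]
      have hb0 : 0 ≤ π / (2 * q) * Real.cot x := by positivity
      rw [Real.norm_eq_abs, abs_pow, abs_of_nonneg hb0]
      apply pow_le_pow_left₀ hb0
      have step1 : π / (2 * q) * Real.cot x ≤ π / (2 * q) * (1 / x) := by
        apply mul_le_mul_of_nonneg_left hc1 (by positivity)
      refine step1.trans ?_
      rw [hx]
      have heq : π / (2 * (q:ℝ)) * (1 / (((k : ℝ) + 1) * π / (2 * q + 1)))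
          = (2 * (q:ℝ) + 1) / (2 * q) * (1 / ((k:ℝ) + 1)) := by
        field_simp
      rw [heq]
      have h32 : (2 * (q:ℝ) + 1) / (2 * q) ≤ 3 / 2 := by
        rw [div_le_div_iff₀ hq0 two_pos]
        have : (1:ℝ) ≤ q := by exact_mod_cast hq
        nlinarith
      calc (2 * (q:ℝ) + 1) / (2 * q) * (1 / ((k:ℝ) + 1))
          ≤ 3 / 2 * (1 / ((k:ℝ) + 1)) :=
            mul_le_mul_of_nonneg_right h32 (by positivity)
        _ = 3 / 2 / ((k:ℝ) + 1) := by rw [mul_one_div]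
    · rw [hF]
      simp only [if_neg h, norm_zero]
      positivity
  have hmain := tendsto_tsum_of_dominated_convergence hsum hab hbound
  refine Tendsto.congr (fun q => ?_) hmain
  -- ∑' k, F q k = (π/(2q))^m * ∑ p in Icc 1 q, ...
  have hts : ∑' k, F q k = ∑ k ∈ Finset.range q, F q k := by
    refine tsum_eq_sum ?_
    intro k hk
    rw [Finset.mem_range, not_lt] at hk
    have hne : ¬ (k + 1 ≤ q) := by omega
    simp only [hF, if_neg hne]
  rw [hts]
  rw [Finset.mul_sum, ← Finset.Ico_add_one_right_eq_Icc, Finset.sum_Ico_eq_sum_range]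
  refine Finset.sum_congr rfl fun k hk => ?_
  rw [Finset.mem_range] at hk
  have hle : k + 1 ≤ q := by omega
  simp only [hF, if_pos hle]
  push_cast
  ring_nf
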